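/- Let p ≥ 1 and define f_r(u) = (2/(2r)!)·∏_{k=0}^{r-1}(u² - k²) for r ≥ 1 and f_0(u) = 2. Then for every integer h with 0 ≤ h ≤ p, ∑_{r=0}^{p} (-1)^r 2^{2r} f_r(h) = 2·(-1)^h, and for h = p+1, ∑_{r=0}^{p} (-1)^r 2^{2r} f_r(p+1) = 2·(-1)^{p+1} + (-1)^p 2^{2p+2}. -/

import Mathlib

open Finset

private def D (n : ℕ) (x : ℚ) : ℚ := ∏ j ∈ Finset.range n, (x - j)

private lemma D_succ (n : ℕ) (x : ℚ) : D (n+1) x = D n x * (x - n) :=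
  Finset.prod_range_succ _ _

private lemma D_succ_left (n : ℕ) (x : ℚ) : D (n+1) x = x * D n (x - 1) := by
  unfold D
  rw [Finset.prod_range_succ']
  rw [mul_comm]
  congr 1
  · simp
  · apply Finset.prod_congr rfl
    intro j _
    push_cast
    ring

private def P (r : ℕ) (u : ℚ) : ℚ := ∏ k ∈ Finset.range r, (u^2 - (k:ℚ)^2)

private lemma P_eq (r : ℕ) (u : ℚ) : P (r+1) u = u * D (2*r+1) (u + r) := by
  induction r with
  | zero => simp [P, D]; ring
  | succ m ih =>
    have h1 : D (2*(m+1)+1) (u + ((m+1:ℕ):ℚ)) =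
        (u + m + 1) * (D (2*m+1) (u + m) * (u + m - (2*m+1))) := by
      rw [show 2*(m+1)+1 = ((2*m+1)+1)+1 from rfl, D_succ_left,
        show (u + ((m+1:ℕ):ℚ) - 1) = u + m by push_cast; ring, D_succ]
      push_cast; ring
    rw [P, Finset.prod_range_succ, ← P, ih, h1]
    push_cast
    ring

private lemma P_rec (r : ℕ) (u : ℚ) :
    P (r+1) (u+1) + P (r+1) (u-1) =
      2 * P (r+1) u + ((2*r+2) * (2*r+1)) * P r u := by
  match r with
  | 0 => simp [P, D]; ring
  | (m+1) =>
    have e1 : D (2*(m+1)+1) (u+1 + ((m+1:ℕ):ℚ)) =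
        (u+m+2) * ((u+m+1) * D (2*m+1) (u+m)) := by
      rw [show 2*(m+1)+1 = ((2*m+1)+1)+1 from rfl, D_succ_left,
        show (u+1 + ((m+1:ℕ):ℚ) - 1) = u+m+1 by push_cast; ring, D_succ_left,
        show (u+(m:ℚ)+1 - 1) = u+m by push_cast; ring]
      push_cast; ring
    have e2 : D (2*(m+1)+1) (u-1 + ((m+1:ℕ):ℚ)) =
        (D (2*m+1) (u+m) * (u+m - (2*m+1))) * (u+m - (2*m+2)) := by
      rw [show 2*(m+1)+1 = ((2*m+1)+1)+1 from rfl, D_succ,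
        show (u-1 + ((m+1:ℕ):ℚ)) = u+m by push_cast; ring, D_succ]
      push_cast; ring
    have e3 : D (2*(m+1)+1) (u + ((m+1:ℕ):ℚ)) =
        (u+m+1) * (D (2*m+1) (u+m) * (u+m - (2*m+1))) := by
      rw [show 2*(m+1)+1 = ((2*m+1)+1)+1 from rfl, D_succ_left,
        show (u + ((m+1:ℕ):ℚ) - 1) = u+m by push_cast; ring, D_succ]
      push_cast; ring
    rw [P_eq, P_eq, P_eq, P_eq, e1, e2, e3]
    push_cast
    ring

private lemma asc_prod (n : ℕ) (m : ℕ) :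
    (∏ k ∈ Finset.range m, ((n:ℚ) + k)) = Nat.ascFactorial n m := by
  induction m with
  | zero => simp
  | succ q ih =>
    rw [Finset.prod_range_succ, ih, Nat.ascFactorial_succ]
    push_cast
    ring

private lemma fact_asc (p : ℕ) (hp : 1 ≤ p) :
    2 * (Nat.factorial p * Nat.ascFactorial p p) = Nat.factorial (2*p) := by
  obtain ⟨q, rfl⟩ : ∃ q, p = q+1 := ⟨p-1, by omega⟩
  have h1 : Nat.factorial q * Nat.ascFactorial (q+1) (q+1) = Nat.factorial (q + (q+1)) :=
    Nat.factorial_mul_ascFactorial q (q+1)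
  have h2 : Nat.factorial (2*(q+1)) = (2*q+2) * Nat.factorial (2*q+1) := by
    rw [show 2*(q+1) = (2*q+1)+1 from rfl, Nat.factorial_succ]
  rw [h2, show 2*q+1 = q + (q+1) from by omega, ← h1, Nat.factorial_succ]
  ring

theorem stmt7 (p : ℕ) (hp : 1 ≤ p)
    (f : ℕ → ℤ → ℚ)
    (hf0 : ∀ u : ℤ, f 0 u = 2)
    (hf : ∀ r, 1 ≤ r → ∀ u : ℤ, f r u =
      2 / (Nat.factorial (2 * r)) *
        ∏ k ∈ Finset.range r, ((u ^ 2 - (k : ℤ) ^ 2 : ℤ) : ℚ)) :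
    (∀ h : ℤ, 0 ≤ h → h ≤ p →
      ∑ r ∈ Finset.range (p + 1), (-1 : ℚ) ^ r * 2 ^ (2 * r) * f r h =
        2 * (-1 : ℚ) ^ h) ∧
    (∑ r ∈ Finset.range (p + 1), (-1 : ℚ) ^ r * 2 ^ (2 * r) * f r ((p : ℤ) + 1) =
      2 * (-1 : ℚ) ^ ((p : ℤ) + 1) + (-1 : ℚ) ^ p * 2 ^ (2 * p + 2)) := by
  -- bridge: f in terms of P
  have fP : ∀ (r : ℕ) (u : ℤ), f r u = 2 / (Nat.factorial (2*r)) * P r (u : ℚ) := by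
    intro r u
    match r with
    | 0 => simp [hf0, P]
    | (s+1) =>
      rw [hf (s+1) (by omega) u]
      congr 1
      rw [P]
      push_cast
      rfl
  -- recurrence for f
  have frec : ∀ (r : ℕ) (u : ℤ),
      f (r+1) (u+1) + f (r+1) (u-1) = 2 * f (r+1) u + f r u := by
    intro r u
    rw [fP, fP, fP, fP]
    have c1 : ((u + 1 : ℤ) : ℚ) = (u : ℚ) + 1 := by push_cast; ring
    have c2 : ((u - 1 : ℤ) : ℚ) = (u : ℚ) - 1 := by push_cast; ring
    rw [c1, c2]
    have hfac : (Nat.factorial (2*(r+1)) : ℚ) =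
        (((2*r:ℚ)+2) * ((2*r:ℚ)+1)) * Nat.factorial (2*r) := by
      rw [show 2*(r+1) = ((2*r)+1)+1 from rfl, Nat.factorial_succ, Nat.factorial_succ]
      push_cast; ring
    have hne : (Nat.factorial (2*r) : ℚ) ≠ 0 := by
      exact_mod_cast Nat.factorial_ne_zero _
    have hne2 : (((2*r:ℚ)+2) * ((2*r:ℚ)+1)) ≠ 0 := by positivity
    rw [hfac]
    calc 2 / ((((2*r:ℚ)+2) * ((2*r:ℚ)+1)) * Nat.factorial (2*r)) * P (r+1) ((u:ℚ)+1)
          + 2 / ((((2*r:ℚ)+2) * ((2*r:ℚ)+1)) * Nat.factorial (2*r)) * P (r+1) ((u:ℚ)-1)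
        = 2 / ((((2*r:ℚ)+2) * ((2*r:ℚ)+1)) * Nat.factorial (2*r)) *
            (P (r+1) ((u:ℚ)+1) + P (r+1) ((u:ℚ)-1)) := by ring
      _ = 2 / ((((2*r:ℚ)+2) * ((2*r:ℚ)+1)) * Nat.factorial (2*r)) *
            (2 * P (r+1) (u:ℚ) + ((2*(r:ℚ)+2) * (2*(r:ℚ)+1)) * P r (u:ℚ)) := by
              rw [P_rec r (u:ℚ)]
      _ = 2 * (2 / ((((2*r:ℚ)+2) * ((2*r:ℚ)+1)) * Nat.factorial (2*r)) * P (r+1) (u:ℚ))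
            + 2 / (Nat.factorial (2*r)) * P r (u:ℚ) := by
              field_simp
  -- f r n = 0 for n < r
  have fzero : ∀ (r n : ℕ), n < r → f r (n : ℤ) = 0 := by
    intro r n hn
    rw [hf r (by omega)]
    apply mul_eq_zero_of_right
    apply Finset.prod_eq_zero (Finset.mem_range.mpr hn)
    simp
  -- f p p = 1
  have fpp : f p ((p : ℤ)) = 1 := by
    rw [hf p hp]
    have hsplit : (∏ k ∈ Finset.range p, (((p:ℤ) ^ 2 - (k : ℤ) ^ 2 : ℤ) : ℚ)) =
        (∏ k ∈ Finset.range p, ((p:ℚ) - k)) * (∏ k ∈ Finset.range p, ((p:ℚ) + k)) := by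
      rw [← Finset.prod_mul_distrib]
      apply Finset.prod_congr rfl
      intro k _
      push_cast; ring
    have h1 : (∏ k ∈ Finset.range p, ((p:ℚ) - k)) = Nat.factorial p := by
      rw [← Finset.prod_range_reflect]
      have hn : (∏ k ∈ Finset.range p, ((k:ℚ) + 1)) = Nat.factorial p := by
        exact_mod_cast congrArg (Nat.cast : ℕ → ℚ)
          (Finset.prod_range_add_one_eq_factorial p)
      rw [← hn]
      apply Finset.prod_congr rfl
      intro j hj
      have hj' : j < p := Finset.mem_range.mp hj
      rw [Nat.cast_sub (by omega), Nat.cast_sub (by omega)]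
      push_cast
      ring
    rw [hsplit, h1, asc_prod p p]
    have hQ : ((Nat.factorial (2*p)) : ℚ) =
        2 * ((Nat.factorial p : ℚ) * (Nat.ascFactorial p p : ℚ)) := by
      exact_mod_cast (fact_asc p hp).symm
    rw [hQ]
    have hne : ((Nat.factorial p : ℚ) * (Nat.ascFactorial p p : ℚ)) ≠ 0 := by
      obtain ⟨q, rfl⟩ : ∃ q, p = q+1 := ⟨p-1, by omega⟩
      have h1 := Nat.factorial_pos (q+1)
      have h2 := Nat.ascFactorial_pos q (q+1)
      apply mul_ne_zero
      · exact_mod_cast h1.ne'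
      · exact_mod_cast h2.ne'
    field_simp
    exact div_self (right_ne_zero_of_mul hne)
  -- the partial sums
  set c : ℕ → ℚ := fun r => (-1)^r * 2^(2*r) with hc
  set T : ℤ → ℚ := fun x => ∑ r ∈ Finset.range (p+1), c r * f r x with hTdef
  have hT : ∀ x : ℤ, T x = ∑ r ∈ Finset.range (p+1), c r * f r x := fun _ => rfl
  have hcs : ∀ r : ℕ, c (r+1) = -4 * c r := by
    intro r
    simp only [hc]
    rw [pow_succ, show 2*(r+1) = (2*r+1)+1 from rfl, pow_succ, pow_succ]
    ring
  have e0 : ∀ x : ℤ, T x = (∑ r ∈ Finset.range p, c (r+1) * f (r+1) x) + 2 := by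
    intro x
    rw [hT, Finset.sum_range_succ']
    simp [hc, hf0 x]
  have e2 : ∀ x : ℤ, (∑ r ∈ Finset.range p, c r * f r x) = T x - c p * f p x := by
    intro x
    rw [hT, Finset.sum_range_succ]
    ring
  have Trec : ∀ h : ℤ, T (h+1) + T (h-1) = -2 * T h + 4 * (c p * f p h) := by
    intro h
    rw [e0 (h+1), e0 (h-1)]
    have step : (∑ r ∈ Finset.range p, c (r+1) * f (r+1) (h+1))
        + (∑ r ∈ Finset.range p, c (r+1) * f (r+1) (h-1))
        = ∑ r ∈ Finset.range p, (2 * (c (r+1) * f (r+1) h) + (-4) * (c r * f r h)) := by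
      rw [← Finset.sum_add_distrib]
      apply Finset.sum_congr rfl
      intro r _
      have := frec r h
      calc c (r+1) * f (r+1) (h+1) + c (r+1) * f (r+1) (h-1)
          = c (r+1) * (f (r+1) (h+1) + f (r+1) (h-1)) := by ring
        _ = c (r+1) * (2 * f (r+1) h + f r h) := by rw [this]
        _ = 2 * (c (r+1) * f (r+1) h) + (-4) * (c r * f r h) := by rw [hcs]; ring
    have expand : (∑ r ∈ Finset.range p, c (r+1) * f (r+1) (h+1)) + 2
        + ((∑ r ∈ Finset.range p, c (r+1) * f (r+1) (h-1)) + 2)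
        = ∑ r ∈ Finset.range p, (2 * (c (r+1) * f (r+1) h) + (-4) * (c r * f r h)) + 4 := by
      rw [← step]; ring
    rw [expand, Finset.sum_add_distrib, ← Finset.mul_sum, ← Finset.mul_sum,
      show (∑ r ∈ Finset.range p, c (r+1) * f (r+1) h) = T h - 2 from by rw [e0 h]; ring,
      e2 h]
    ring
  have T0 : T 0 = 2 := by
    rw [hT, Finset.sum_eq_single 0]
    · simp [hc, hf0]
    · intro b _ hb
      have : f b ((0:ℕ):ℤ) = 0 := fzero b 0 (by omega)
      simp only [Nat.cast_zero] at this
      rw [this, mul_zero]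
    · intro habs
      exact absurd (Finset.mem_range.mpr (by omega)) habs
  have T1 : T 1 = -2 := by
    rw [hT, Finset.range_eq_Ico,
      ← Finset.sum_Ico_consecutive _ (by omega : 0 ≤ 2) (by omega : 2 ≤ p+1)]
    have hfirst : (∑ r ∈ Finset.Ico 0 2, c r * f r 1) = -2 := by
      rw [← Finset.range_eq_Ico, Finset.sum_range_succ, Finset.sum_range_one]
      have hf11 : f 1 1 = 1 := by
        rw [hf 1 le_rfl]
        simp [Nat.factorial]
      rw [hf11, hf0]
      simp [hc]
      norm_num
    have hsec : (∑ r ∈ Finset.Ico 2 (p+1), c r * f r 1) = 0 := by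
      apply Finset.sum_eq_zero
      intro r hr
      have hr2 : 2 ≤ r := (Finset.mem_Ico.mp hr).1
      have : f r ((1:ℕ):ℤ) = 0 := fzero r 1 (by omega)
      simp only [Nat.cast_one] at this
      rw [this, mul_zero]
    rw [hfirst, hsec]
    norm_num
  have Tn : ∀ n : ℕ, n ≤ p → T (n : ℤ) = 2 * (-1:ℚ)^n := by
    intro n
    induction n using Nat.strong_induction_on with
    | _ n ih =>
      match n with
      | 0 => intro _; simpa using T0
      | 1 => intro _; rw [show ((1:ℕ):ℤ) = 1 from rfl, T1]; norm_num
      | (m+2) =>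
        intro hle
        have h1 := Trec ((m:ℤ)+1)
        have hz : f p ((m:ℤ)+1) = 0 := by
          have := fzero p (m+1) (by omega)
          simpa using this
        rw [hz] at h1
        have hA := ih (m+1) (by omega) (by omega)
        have hB := ih m (by omega) (by omega)
        have c1 : ((m:ℤ)+1+1) = ((m+2:ℕ):ℤ) := by push_cast; ring
        have c2 : ((m:ℤ)+1-1) = ((m:ℕ):ℤ) := by push_cast; ring
        have c3 : ((m:ℤ)+1) = ((m+1:ℕ):ℤ) := by push_cast; ring
        rw [c1, c2, c3, hA, hB] at h1
        have : T ((m+2:ℕ):ℤ) = -2 * (2 * (-1:ℚ)^(m+1)) - 2 * (-1:ℚ)^m := by linarith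
        rw [this, pow_succ, pow_succ]
        ring
  constructor
  · intro h h0 hle
    obtain ⟨n, rfl⟩ := Int.eq_ofNat_of_zero_le h0
    have hn : n ≤ p := by exact_mod_cast hle
    rw [zpow_natCast]
    exact Tn n hn
  · have h1 := Trec (p:ℤ)
    rw [fpp] at h1
    have c2 : ((p:ℤ)-1) = ((p-1:ℕ):ℤ) := by omega
    have hA : T (p:ℤ) = 2 * (-1:ℚ)^p := Tn p le_rfl
    have hB : T ((p:ℤ)-1) = 2 * (-1:ℚ)^(p-1) := by
      rw [c2]; exact Tn (p-1) (by omega)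
    rw [hA, hB] at h1
    have key : T ((p:ℤ)+1) = -2 * (2 * (-1:ℚ)^p) - 2 * (-1:ℚ)^(p-1)
        + 4 * ((-1:ℚ)^p * 2^(2*p)) := by
      have hcp : c p = (-1:ℚ)^p * 2^(2*p) := rfl
      rw [← hcp]
      linarith
    have goal2 : T ((p:ℤ)+1) = 2 * (-1:ℚ)^((p:ℤ)+1) + (-1:ℚ)^p * 2^(2*p+2) := by
      rw [key]
      obtain ⟨q, rfl⟩ : ∃ q, p = q+1 := ⟨p-1, by omega⟩
      have hz : ((-1:ℚ))^(((q+1:ℕ):ℤ)+1) = (-1:ℚ)^(q+2) := by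
        rw [show (((q+1:ℕ):ℤ)+1) = ((q+2:ℕ):ℤ) from by push_cast; ring, zpow_natCast]
      rw [hz]
      simp only [Nat.add_sub_cancel, pow_succ, pow_add,
        show 2*(q+1) = 2*q+2 from by ring, show 2*(q+1)+2 = 2*q+4 from by ring]
      ring
    exact goal2
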